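/- Let (P, Q) and (P', Q') be pairs of orthogonal projections on H, both in generic position, with P - Q = P' - Q'. Then ‖P + Q‖ = ‖P' + Q'‖. -/

import Mathlib

open ContinuousLinearMap

variable {H : Type*} [NormedAddCommGroup H] [InnerProductSpace ℂ H] [CompleteSpace H]

/-- An orthogonal projection: a selfadjoint idempotent bounded operator. -/
def IsOrthogonalProjection (P : H →L[ℂ] H) : Prop :=
  IsSelfAdjoint P ∧ P * P = P

/-- A symmetry: a selfadjoint unitary operator. -/
def IsSymmetry (V : H →L[ℂ] H) : Prop :=
  IsSelfAdjoint V ∧ V * V = 1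

/-- Two orthogonal projections are in generic position if the four canonical
intersections of their ranges and kernels are trivial. -/
def GenericPosition (P Q : H →L[ℂ] H) : Prop :=
  LinearMap.range (P : H →ₗ[ℂ] H) ⊓ LinearMap.range (Q : H →ₗ[ℂ] H) = ⊥ ∧
  LinearMap.range (P : H →ₗ[ℂ] H) ⊓ LinearMap.ker (Q : H →ₗ[ℂ] H) = ⊥ ∧
  LinearMap.ker (P : H →ₗ[ℂ] H) ⊓ LinearMap.range (Q : H →ₗ[ℂ] H) = ⊥ ∧
  LinearMap.ker (P : H →ₗ[ℂ] H) ⊓ LinearMap.ker (Q : H →ₗ[ℂ] H) = ⊥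


set_option maxHeartbeats 1000000 in
/-- If `B` is selfadjoint, anticommutes with the selfadjoint `A` and `B² = 1 - A²`, then the
spectrum of `B` is symmetric within the open unit interval. -/
lemma aux_spec_symm [Nontrivial H] {A B : H →L[ℂ] H} (hA : IsSelfAdjoint A) (hB : IsSelfAdjoint B)
    (hAB : A * B = -(B * A)) (hsq : B * B = 1 - A * A) {l : ℝ}
    (hl : l ∈ spectrum ℝ B) (hlt : |l| < 1) : -l ∈ spectrum ℝ B := by
  by_contra hcon
  obtain ⟨u, hu⟩ := spectrum.notMem_iff.mp hcon
  obtain ⟨R, hu1⟩ : ∃ R : H →L[ℂ] H, R * (algebraMap ℝ (H →L[ℂ] H) (-l) - B) = 1 :=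
    ⟨↑u⁻¹, by rw [← hu]; exact u.inv_mul⟩
  obtain ⟨e, he⟩ : ∃ e : ℝ, e = 1 - |l| := ⟨_, rfl⟩
  have he0 : 0 < e := by rw [he]; linarith [hlt]
  have he1 : e ≤ 1 := by have := abs_nonneg l; rw [he]; linarith
  obtain ⟨K, hK⟩ : ∃ K : ℝ, K = ‖R‖ * ‖A‖ := ⟨_, rfl⟩
  have hK0 : 0 ≤ K := hK ▸ mul_nonneg (norm_nonneg _) (norm_nonneg _)
  obtain ⟨d, hd⟩ : ∃ d : ℝ, d = min (e/4) (Real.sqrt (e/2) / (K + 1)) := ⟨_, rfl⟩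
  have hd0 : 0 < d := by
    rw [hd]
    exact lt_min (by linarith) (div_pos (Real.sqrt_pos.mpr (by linarith)) (by linarith))
  set f : ℝ → ℝ := fun t => max 0 (1 - |t - l| / d) with hf
  have hfc : Continuous f := continuous_const.max
    (continuous_const.sub (((continuous_id.sub continuous_const).abs).div_const d))
  have hfl : f l = 1 := by simp [hf]
  have hf01 : ∀ t, 0 ≤ f t ∧ f t ≤ 1 := fun t => ⟨le_max_left _ _, by
    apply max_le (by norm_num)
    have : 0 ≤ |t - l| / d := div_nonneg (abs_nonneg _) hd0.le
    linarith⟩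
  have hfsupp : ∀ t, d ≤ |t - l| → f t = 0 := fun t ht => by
    apply max_eq_left
    have : 1 ≤ |t - l| / d := (one_le_div hd0).mpr ht
    linarith
  set F : H →L[ℂ] H := cfc f B with hF
  have hFsa : IsSelfAdjoint F := cfc_predicate f B
  -- ‖F‖ ≥ 1
  have hF1 : 1 ≤ ‖F‖ := by
    have h1 : f l ∈ spectrum ℝ F := by
      rw [hF, cfc_map_spectrum f B hB hfc.continuousOn]; exact ⟨l, hl, rfl⟩
    have := spectrum.norm_le_norm_of_mem h1
    rwa [hfl, norm_one] at this
  -- ‖B * F‖ ≤ |l| + d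
  have hBF : ‖B * F‖ ≤ |l| + d := by
    have hBFe : B * F = cfc (fun t => t * f t) B := by
      conv_lhs => rw [← cfc_id' ℝ B hB]
      rw [hF]
      exact (cfc_mul (fun t : ℝ => t) f B continuous_id.continuousOn hfc.continuousOn).symm
    rw [hBFe]
    apply norm_cfc_le (by positivity)
    intro t _
    rcases le_or_gt d |t - l| with h | h
    · simp [hfsupp t h, abs_nonneg, add_nonneg (abs_nonneg l) hd0.le]
    · have h1 := (hf01 t).1; have h2 := (hf01 t).2
      have : |t| ≤ |l| + d := by
        have := abs_sub_abs_le_abs_sub t l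
        linarith
      rw [Real.norm_eq_abs, abs_mul, abs_of_nonneg h1]
      nlinarith [abs_nonneg t]
  -- ‖(B - l) * F‖ ≤ d
  have hG : ‖(B - algebraMap ℝ (H →L[ℂ] H) l) * F‖ ≤ d := by
    have hBl : B - algebraMap ℝ (H →L[ℂ] H) l = cfc (fun t : ℝ => t - l) B := by
      rw [cfc_sub (fun t : ℝ => t) (fun _ : ℝ => l) B continuous_id.continuousOn
        continuousOn_const, cfc_id' ℝ B hB, cfc_const l B hB]
    have hGe : (B - algebraMap ℝ (H →L[ℂ] H) l) * F = cfc (fun t => (t - l) * f t) B := by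
      rw [hBl, hF]
      exact (cfc_mul (fun t : ℝ => t - l) f B
        (continuous_id.sub continuous_const).continuousOn hfc.continuousOn).symm
    rw [hGe]
    apply norm_cfc_le hd0.le
    intro t _
    rcases le_or_gt d |t - l| with h | h
    · simp [hfsupp t h, hd0.le]
    · have h1 := (hf01 t).1; have h2 := (hf01 t).2
      rw [Real.norm_eq_abs, abs_mul, abs_of_nonneg h1]
      nlinarith [abs_nonneg (t - l)]
  -- upper bound on ‖A * F‖
  have hup : ‖A * F‖ ≤ K * d := by
    have hBA : B * A = -(A * B) := by rw [hAB, neg_neg]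
    have hcomm : algebraMap ℝ (H →L[ℂ] H) l * A = A * algebraMap ℝ (H →L[ℂ] H) l :=
      Algebra.commutes l A
    have hanti : (algebraMap ℝ (H →L[ℂ] H) (-l) - B) * (A * F)
        = A * ((B - algebraMap ℝ (H →L[ℂ] H) l) * F) := by
      rw [map_neg]
      calc (-(algebraMap ℝ (H →L[ℂ] H) l) - B) * (A * F)
          = -((algebraMap ℝ (H →L[ℂ] H) l * A) * F) - (B * A) * F := by noncomm_ring
        _ = -((A * algebraMap ℝ (H →L[ℂ] H) l) * F) - (-(A * B)) * F := by rw [hcomm, hBA]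
        _ = A * ((B - algebraMap ℝ (H →L[ℂ] H) l) * F) := by noncomm_ring
    have hAFe : A * F = R * (A * ((B - algebraMap ℝ (H →L[ℂ] H) l) * F)) := by
      rw [← hanti, ← mul_assoc, hu1, one_mul]
    rw [hAFe, hK]
    calc ‖R * (A * ((B - algebraMap ℝ (H →L[ℂ] H) l) * F))‖
        ≤ ‖R‖ * ‖A * ((B - algebraMap ℝ (H →L[ℂ] H) l) * F)‖ := norm_mul_le _ _
      _ ≤ ‖R‖ * (‖A‖ * ‖(B - algebraMap ℝ (H →L[ℂ] H) l) * F‖) := by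
          gcongr; exact norm_mul_le _ _
      _ ≤ ‖R‖ * (‖A‖ * d) := by gcongr
      _ = ‖R‖ * ‖A‖ * d := by ring
  -- lower bound on ‖A * F‖
  have hlow : ‖F‖ * ‖F‖ - ‖B * F‖ * ‖B * F‖ ≤ ‖A * F‖ * ‖A * F‖ := by
    have e1 : ‖A * F‖ * ‖A * F‖ = ‖star (A * F) * (A * F)‖ := CStarRing.norm_star_mul_self.symm
    have e2 : star (A * F) * (A * F) = F * F - star (B * F) * (B * F) := by
      rw [star_mul, star_mul, hA.star_eq, hB.star_eq, hFsa.star_eq]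
      calc F * A * (A * F) = F * (A * A) * F := by noncomm_ring
        _ = F * F - F * (B * B) * F := by rw [hsq]; noncomm_ring
        _ = F * F - F * B * (B * F) := by noncomm_ring
    have e3 : ‖F * F‖ = ‖F‖ * ‖F‖ := by
      nth_rewrite 1 [← hFsa.star_eq]; exact CStarRing.norm_star_mul_self
    have e4 : ‖star (B * F) * (B * F)‖ = ‖B * F‖ * ‖B * F‖ := CStarRing.norm_star_mul_self
    rw [e1, e2]
    calc ‖F‖ * ‖F‖ - ‖B * F‖ * ‖B * F‖ = ‖F * F‖ - ‖star (B * F) * (B * F)‖ := by rw [e3, e4]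
      _ ≤ ‖F * F - star (B * F) * (B * F)‖ := norm_sub_norm_le _ _
  -- numeric contradiction
  clear_value F f
  clear hF hf hu1 hfl hfsupp hsq hAB hl hcon hu hfc hf01
  have hd4 : d ≤ e / 4 := hd ▸ min_le_left _ _
  have hds : d ≤ Real.sqrt (e/2) / (K+1) := hd ▸ min_le_right _ _
  have hs0 : 0 < Real.sqrt (e/2) := Real.sqrt_pos.mpr (by linarith)
  have hKd : K * d < Real.sqrt (e/2) := by
    have h1 : K * d ≤ K * (Real.sqrt (e/2) / (K+1)) := by gcongr
    have h2 : K * (Real.sqrt (e/2) / (K+1)) < Real.sqrt (e/2) := by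
      rw [mul_div_assoc', div_lt_iff₀ (by linarith)]
      nlinarith
    linarith
  have hsq2 : Real.sqrt (e/2) * Real.sqrt (e/2) = e/2 := Real.mul_self_sqrt (by linarith)
  have hup2 : ‖A * F‖ * ‖A * F‖ < e/2 := by
    have h0 : 0 ≤ ‖A * F‖ := norm_nonneg _
    nlinarith
  have hBFl : ‖B * F‖ ≤ 1 - 3*e/4 := by
    have : |l| = 1 - e := by rw [he]; ring
    linarith
  have hBF0 : 0 ≤ ‖B * F‖ := norm_nonneg _
  nlinarith [hlow, hup2, hF1, hBFl, hBF0, he0, he1]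

set_option maxHeartbeats 1000000 in
/-- For projections `P`, `Q` with trivial joint kernel we have `‖P + Q‖ = 1 + ‖P + Q - 1‖`. -/
lemma aux_norm_sum_eq [Nontrivial H] (P Q : H →L[ℂ] H)
    (hPsa : IsSelfAdjoint P) (hP2 : P * P = P) (hQsa : IsSelfAdjoint Q) (hQ2 : Q * Q = Q)
    (hker : LinearMap.ker (P : H →ₗ[ℂ] H) ⊓ LinearMap.ker (Q : H →ₗ[ℂ] H) = ⊥) :
    ‖P + Q‖ = 1 + ‖P + Q - 1‖ := by
  haveI : Nontrivial (H →L[ℂ] H) := by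
    obtain ⟨x, hx⟩ := exists_ne (0 : H)
    exact nontrivial_of_ne 0 1 fun h => hx (by simpa using (ContinuousLinearMap.ext_iff.1 h.symm x))
  set A : H →L[ℂ] H := P - Q with hA
  set B : H →L[ℂ] H := P + Q - 1 with hB
  have hAsa : IsSelfAdjoint A := hPsa.sub hQsa
  have hBsa : IsSelfAdjoint B := (hPsa.add hQsa).sub (.one _)
  have hsq : B * B = 1 - A * A := by
    rw [hA, hB]; noncomm_ring; simp only [hP2, hQ2]; abel
  have hAB : A * B = -(B * A) := by
    rw [hA, hB]; noncomm_ring; simp only [hP2, hQ2]; abel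
  have hA2pos : (0 : H →L[ℂ] H) ≤ A * A := by
    have := star_mul_self_nonneg A; rwa [hAsa.star_eq] at this
  have hB2pos : (0 : H →L[ℂ] H) ≤ B * B := by
    have := star_mul_self_nonneg B; rwa [hBsa.star_eq] at this
  have hBB : ‖B * B‖ = ‖B‖ * ‖B‖ := by
    nth_rewrite 1 [← hBsa.star_eq]; exact CStarRing.norm_star_mul_self
  have hr1 : ‖B‖ ≤ 1 := by
    have h1 : ‖B * B‖ ≤ 1 := by
      refine (CStarAlgebra.norm_le_one_iff_of_nonneg _ hB2pos).mpr ?_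
      rw [hsq]; exact sub_le_self 1 hA2pos
    nlinarith [norm_nonneg B, hBB]
  -- the key fact: ‖B‖ lies in the spectrum of B
  have hmem : ‖B‖ ∈ spectrum ℝ B := by
    rcases CStarAlgebra.norm_or_neg_norm_mem_spectrum hBsa with h | h
    · exact h
    by_cases hr : ‖B‖ < 1
    · have := aux_spec_symm hAsa hBsa hAB hsq h
        (by rw [abs_neg, abs_of_nonneg (norm_nonneg B)]; exact hr)
      simpa using this
    · have hr1' : ‖B‖ = 1 := le_antisymm hr1 (not_lt.mp hr)
      rw [hr1']
      rw [hr1'] at h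
      by_contra hone
      have hbdd : ∀ t ∈ spectrum ℝ B, |t| ≤ 1 := fun t ht => by
        have := spectrum.norm_le_norm_of_mem ht
        rw [Real.norm_eq_abs] at this
        exact this.trans hr1
      have hsymm : ∀ t ∈ spectrum ℝ B, |t| < 1 → -t ∈ spectrum ℝ B := fun t ht hlt =>
        aux_spec_symm hAsa hBsa hAB hsq ht hlt
      -- isolation of -1 in the spectrum
      have hiso : ∃ c : ℝ, -1 < c ∧ c ≤ 0 ∧ ∀ t ∈ spectrum ℝ B, t = -1 ∨ c ≤ t := by
        by_contra hnc
        push_neg at hnc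
        have hcpt : IsCompact (spectrum ℝ B) := spectrum.isCompact B
        have hne : (spectrum ℝ B).Nonempty := ⟨-1, h⟩
        have hsmem : sSup (spectrum ℝ B) ∈ spectrum ℝ B := hcpt.sSup_mem hne
        have hs1 : sSup (spectrum ℝ B) ≤ 1 := by
          have := hbdd _ hsmem; rw [abs_le] at this; exact this.2
        have hsge : ∀ ε : ℝ, 0 < ε → 1 - ε ≤ sSup (spectrum ℝ B) := by
          intro ε hε
          have hmin0 : 0 < min ε (1/2) := lt_min hε (by norm_num)
          have hminh : min ε (1/2) ≤ 1/2 := min_le_right _ _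
          obtain ⟨t, htσ, htne, htlt⟩ :=
            hnc (-1 + min ε (1/2)) (by linarith) (by linarith)
          have ht1 : -1 ≤ t := by have := hbdd t htσ; rw [abs_le] at this; exact this.1
          have htabs : |t| < 1 := by
            rw [abs_lt]
            exact ⟨lt_of_le_of_ne ht1 (Ne.symm htne), by linarith⟩
          have hmt : -t ∈ spectrum ℝ B := hsymm t htσ htabs
          have hle : -t ≤ sSup (spectrum ℝ B) := le_csSup hcpt.bddAbove hmt
          have hminl : min ε (1/2) ≤ ε := min_le_left _ _
          linarith
        have hge1 : (1:ℝ) ≤ sSup (spectrum ℝ B) := by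
          refine le_of_forall_pos_le_add fun ε hε => ?_
          have := hsge ε hε; linarith
        exact hone ((le_antisymm hs1 hge1) ▸ hsmem)
      obtain ⟨c, hc1, hc0, hciso⟩ := hiso
      have hc1' : (0:ℝ) < c + 1 := by linarith
      set g : ℝ → ℝ := fun t => max 0 (min 1 ((c - t)/(c+1))) with hg
      have hgc : Continuous g := continuous_const.max
        (continuous_const.min ((continuous_const.sub continuous_id).div_const _))
      have hgneg1 : g (-1) = 1 := by
        simp only [hg]
        rw [show c - (-1) = c + 1 by ring, div_self (ne_of_gt hc1')]
        norm_num
      have hgsupp : ∀ t, c ≤ t → g t = 0 := fun t ht => by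
        simp only [hg]
        apply max_eq_left
        refine (min_le_right _ _).trans ?_
        apply div_nonpos_of_nonpos_of_nonneg <;> linarith
      set E : H →L[ℂ] H := cfc g B with hE
      have hEne : E ≠ 0 := by
        intro h0
        have h1 : g (-1) ∈ spectrum ℝ E := by
          rw [hE, cfc_map_spectrum g B hBsa hgc.continuousOn]; exact ⟨-1, h, rfl⟩
        rw [hgneg1, h0, spectrum.zero_eq] at h1
        simp at h1
      have hPQE : (P + Q) * E = 0 := by
        have h1 : P + Q = B + 1 := by rw [hB]; abel
        have h2 : B + 1 = cfc (fun t : ℝ => t + 1) B := by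
          rw [cfc_add (a := B) (fun t : ℝ => t) (fun _ : ℝ => 1) continuous_id.continuousOn
            continuousOn_const, cfc_id' ℝ B hBsa, cfc_const 1 B hBsa, map_one]
        have h3 : (B + 1) * E = cfc (fun t => (t + 1) * g t) B := by
          rw [h2, hE]
          exact (cfc_mul (fun t : ℝ => t + 1) g B
            (continuous_id.add continuous_const).continuousOn hgc.continuousOn).symm
        have h4 : ∀ t ∈ spectrum ℝ B, (t + 1) * g t = (fun _ => (0:ℝ)) t := by
          intro t ht
          rcases hciso t ht with h' | h'
          · rw [h']; ring
          · rw [hgsupp t h', mul_zero]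
        rw [h1, h3, cfc_congr h4, cfc_const 0 B hBsa, map_zero]
      have hsum : star (P * E) * (P * E) + star (Q * E) * (Q * E) = 0 := by
        have h5 : star (P * E) * (P * E) + star (Q * E) * (Q * E)
            = star E * ((P + Q) * E) := by
          rw [star_mul, star_mul, hPsa.star_eq, hQsa.star_eq]
          calc star E * P * (P * E) + star E * Q * (Q * E)
              = star E * ((P * P) * E) + star E * ((Q * Q) * E) := by noncomm_ring
            _ = star E * ((P + Q) * E) := by rw [hP2, hQ2]; noncomm_ring
        rw [h5, hPQE, mul_zero]
      have hPE : P * E = 0 := by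
        have hb := star_mul_self_nonneg (Q * E)
        have h0 : star (P * E) * (P * E) = 0 := by
          refine le_antisymm ?_ (star_mul_self_nonneg (P * E))
          calc star (P * E) * (P * E)
              ≤ star (P * E) * (P * E) + star (Q * E) * (Q * E) := le_add_of_nonneg_right hb
            _ = 0 := hsum
        exact (CStarRing.star_mul_self_eq_zero_iff _).mp h0
      have hQE : Q * E = 0 := by
        have ha := star_mul_self_nonneg (P * E)
        have h0 : star (Q * E) * (Q * E) = 0 := by
          refine le_antisymm ?_ (star_mul_self_nonneg (Q * E))
          calc star (Q * E) * (Q * E)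
              ≤ star (P * E) * (P * E) + star (Q * E) * (Q * E) := le_add_of_nonneg_left ha
            _ = 0 := hsum
        exact (CStarRing.star_mul_self_eq_zero_iff _).mp h0
      obtain ⟨x, hx⟩ : ∃ x, E x ≠ 0 := by
        by_contra hcx
        push_neg at hcx
        exact hEne (ContinuousLinearMap.ext fun x => by simpa using hcx x)
      have hmemker : E x ∈ LinearMap.ker (P : H →ₗ[ℂ] H) ⊓ LinearMap.ker (Q : H →ₗ[ℂ] H) := by
        refine Submodule.mem_inf.mpr ⟨LinearMap.mem_ker.mpr ?_, LinearMap.mem_ker.mpr ?_⟩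
        · have : (P : H →ₗ[ℂ] H) (E x) = (P * E) x := rfl
          rw [this, hPE]; rfl
        · have : (Q : H →ₗ[ℂ] H) (E x) = (Q * E) x := rfl
          rw [this, hQE]; rfl
      rw [hker] at hmemker
      exact hx (Submodule.mem_bot ℂ |>.mp hmemker)
  -- conclude
  have hPQ1B : P + Q = 1 + B := by rw [hB]; abel
  refine le_antisymm ?_ ?_
  · calc ‖P + Q‖ = ‖(1 : H →L[ℂ] H) + B‖ := by rw [hPQ1B]
      _ ≤ ‖(1 : H →L[ℂ] H)‖ + ‖B‖ := norm_add_le _ _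
      _ = 1 + ‖B‖ := by rw [norm_one]
  · have h1 : (1:ℝ) + ‖B‖ ∈ spectrum ℝ (1 + B) := by
      have heq : (1 : H →L[ℂ] H) + B = algebraMap ℝ (H →L[ℂ] H) (1:ℝ) + B := by simp
      rw [heq, ← spectrum.singleton_add_eq]
      exact Set.add_mem_add rfl hmem
    rw [hPQ1B]
    have := spectrum.norm_le_norm_of_mem h1
    rw [Real.norm_eq_abs, abs_of_nonneg (by positivity)] at this
    exact this

/-- For two pairs of projections in generic position with the same difference,
the norms of the sums coincide. -/
theorem norm_sum_invariant (P Q P' Q' : H →L[ℂ] H)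
    (hP : IsOrthogonalProjection P) (hQ : IsOrthogonalProjection Q)
    (hP' : IsOrthogonalProjection P') (hQ' : IsOrthogonalProjection Q')
    (hgen : GenericPosition P Q) (hgen' : GenericPosition P' Q')
    (hdiff : P - Q = P' - Q') :
    ‖P + Q‖ = ‖P' + Q'‖ := by
  rcases subsingleton_or_nontrivial H with hs | hs
  · have : P + Q = P' + Q' := ContinuousLinearMap.ext fun x => Subsingleton.elim _ _
    rw [this]
  · have h1 := aux_norm_sum_eq P Q hP.1 hP.2 hQ.1 hQ.2 hgen.2.2.2
    have h2 := aux_norm_sum_eq P' Q' hP'.1 hP'.2 hQ'.1 hQ'.2 hgen'.2.2.2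
    rw [h1, h2]
    -- it remains to show the norms of B = P+Q-1 and B' = P'+Q'-1 coincide
    have hBsa : IsSelfAdjoint (P + Q - 1) :=
      (hP.1.add hQ.1).sub (.one _)
    have hBsa' : IsSelfAdjoint (P' + Q' - 1) :=
      (hP'.1.add hQ'.1).sub (.one _)
    have hsq : (P + Q - 1) * (P + Q - 1) = 1 - (P - Q) * (P - Q) := by
      noncomm_ring; simp only [hP.2, hQ.2]; abel
    have hsq' : (P' + Q' - 1) * (P' + Q' - 1) = 1 - (P' - Q') * (P' - Q') := by
      noncomm_ring; simp only [hP'.2, hQ'.2]; abel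
    have hBB : ‖(P + Q - 1) * (P + Q - 1)‖ = ‖P + Q - 1‖ * ‖P + Q - 1‖ := by
      nth_rewrite 1 [← hBsa.star_eq]; exact CStarRing.norm_star_mul_self
    have hBB' : ‖(P' + Q' - 1) * (P' + Q' - 1)‖ = ‖P' + Q' - 1‖ * ‖P' + Q' - 1‖ := by
      nth_rewrite 1 [← hBsa'.star_eq]; exact CStarRing.norm_star_mul_self
    have key : ‖P + Q - 1‖ * ‖P + Q - 1‖ = ‖P' + Q' - 1‖ * ‖P' + Q' - 1‖ := by
      rw [← hBB, ← hBB', hsq, hsq', hdiff]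
    have := mul_self_inj_of_nonneg (norm_nonneg (P + Q - 1))
      (norm_nonneg (P' + Q' - 1)) |>.mp key
    rw [this]
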